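/- Let I ⊆ ℝ be an open interval containing 0 and let θ : I → ℝ be a C² function with θ(0) = 0 and θ'(0) = 0. Then, as t → 0, (∫₀ᵗ cos(θ(s)) ds)² = t² − (θ''(0)²/20)·t⁶ + o(t⁶). -/

import Mathlib

open Set Filter Topology Asymptotics

lemma integral_isLittleO_aux {f : ℝ → ℝ} {n : ℕ} (h : f =o[𝓝 (0:ℝ)] fun s => s ^ n) :
    (fun t => ∫ s in (0:ℝ)..t, f s) =o[𝓝 (0:ℝ)] fun t => t ^ (n + 1) := by
  rw [isLittleO_iff] at h ⊢
  intro ε hε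
  obtain ⟨δ, hδ, hball⟩ := Metric.eventually_nhds_iff.1 (h hε)
  rw [Metric.eventually_nhds_iff]
  refine ⟨δ, hδ, fun t ht => ?_⟩
  have htd : |t| < δ := by simpa [Real.dist_eq] using ht
  have key : ∀ s ∈ Set.uIoc (0:ℝ) t, ‖f s‖ ≤ ε * |t| ^ n := by
    intro s hs
    have h1 : |s| ≤ |t| := by
      rcases hs with ⟨hs1, hs2⟩
      have hmin : -|t| ≤ min 0 t := le_min (neg_nonpos.2 (abs_nonneg t)) (neg_abs_le t)
      have hmax : max 0 t ≤ |t| := max_le (abs_nonneg t) (le_abs_self t)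
      exact abs_le.2 ⟨hmin.trans hs1.le, hs2.trans hmax⟩
    have h2 : dist s 0 < δ := by
      rw [Real.dist_eq, sub_zero]; exact lt_of_le_of_lt h1 htd
    calc ‖f s‖ ≤ ε * ‖s ^ n‖ := hball h2
      _ = ε * |s| ^ n := by rw [Real.norm_eq_abs, abs_pow]
      _ ≤ ε * |t| ^ n := by
          exact mul_le_mul_of_nonneg_left (pow_le_pow_left₀ (abs_nonneg s) h1 n) hε.le
  calc ‖∫ s in (0:ℝ)..t, f s‖ ≤ ε * |t| ^ n * |t - 0| :=
        intervalIntegral.norm_integral_le_of_norm_le_const key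
    _ = ε * ‖t ^ (n + 1)‖ := by
        rw [sub_zero, Real.norm_eq_abs, abs_pow, pow_succ]; ring

/-- If `θ` is `C²` on an open interval around `0` with `θ(0) = 0` and `θ'(0) = 0`,
then `(∫₀ᵗ cos(θ(s)) ds)² = t² - (θ''(0)²/20)·t⁶ + o(t⁶)` as `t → 0`. -/
theorem stmt_5 (a b : ℝ) (ha : a < 0) (hb : 0 < b) (θ : ℝ → ℝ)
    (hθ : ContDiffOn ℝ 2 θ (Ioo a b)) (h0 : θ 0 = 0) (h1 : deriv θ 0 = 0) :
    (fun t : ℝ => (∫ s in (0:ℝ)..t, Real.cos (θ s)) ^ 2 -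
        (t ^ 2 - (deriv (deriv θ) 0) ^ 2 / 20 * t ^ 6)) =o[𝓝 0] (fun t : ℝ => t ^ 6) := by
  set c := deriv (deriv θ) 0 with hc
  have hmem : (0:ℝ) ∈ Ioo a b := ⟨ha, hb⟩
  have hopen : IsOpen (Ioo a b) := isOpen_Ioo
  have hnhds : Ioo a b ∈ 𝓝 (0:ℝ) := hopen.mem_nhds hmem
  -- deriv θ is C¹ on Ioo a b
  have hθ' : ContDiffOn ℝ 1 (deriv θ) (Ioo a b) :=
    hθ.deriv_of_isOpen hopen (by norm_num)
  -- second derivative at 0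
  have hd2 : HasDerivAt (deriv θ) c 0 :=
    ((hθ'.contDiffAt hnhds).differentiableAt (by norm_num)).hasDerivAt
  have hE1o : (fun s => deriv θ s - c * s) =o[𝓝 (0:ℝ)] fun s => s ^ 1 := by
    have := hasDerivAt_iff_isLittleO.1 hd2
    simpa [h1, mul_comm, pow_one] using this
  set E₁ : ℝ → ℝ := fun t => ∫ s in (0:ℝ)..t, (deriv θ s - c * s) with hE₁def
  have hE1 : E₁ =o[𝓝 (0:ℝ)] fun t => t ^ 2 := by
    simpa using integral_isLittleO_aux hE1o
  -- a radius inside Ioo a b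
  obtain ⟨ε, hε, hballsub⟩ := Metric.mem_nhds_iff.1 hnhds
  have hsub : ∀ t : ℝ, |t| < ε → uIcc (0:ℝ) t ⊆ Ioo a b := by
    intro t ht s hs
    apply hballsub
    rw [Metric.mem_ball, Real.dist_eq, sub_zero]
    rcases hs with ⟨hs1, hs2⟩
    have hmin : -|t| ≤ min 0 t := le_min (neg_nonpos.2 (abs_nonneg t)) (neg_abs_le t)
    have hmax : max 0 t ≤ |t| := max_le (abs_nonneg t) (le_abs_self t)
    exact lt_of_le_of_lt (abs_le.2 ⟨hmin.trans hs1, hs2.trans hmax⟩) ht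
  have hball_ev : ∀ᶠ t : ℝ in 𝓝 0, |t| < ε := by
    have : Metric.ball (0:ℝ) ε ∈ 𝓝 (0:ℝ) := Metric.ball_mem_nhds _ hε
    filter_upwards [this] with t ht
    simpa [Real.dist_eq] using ht
  -- Taylor expansion of θ via FTC
  have θeq : ∀ᶠ t : ℝ in 𝓝 0, θ t = c / 2 * t ^ 2 + E₁ t := by
    filter_upwards [hball_ev] with t ht
    have hsub' := hsub t ht
    have hderiv : ∀ s ∈ uIcc (0:ℝ) t, HasDerivAt θ (deriv θ s) s := fun s hs =>
      ((hθ.contDiffAt (hopen.mem_nhds (hsub' hs))).differentiableAt (by norm_num)).hasDerivAt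
    have hint : IntervalIntegrable (deriv θ) MeasureTheory.volume 0 t :=
      (hθ'.continuousOn.mono hsub').intervalIntegrable
    have hFTC : ∫ s in (0:ℝ)..t, deriv θ s = θ t - θ 0 :=
      intervalIntegral.integral_eq_sub_of_hasDerivAt hderiv hint
    have hint2 : IntervalIntegrable (fun s => c * s) MeasureTheory.volume 0 t :=
      Continuous.intervalIntegrable (by fun_prop) 0 t
    have : E₁ t = (θ t - θ 0) - c * (t ^ 2 / 2) := by
      show (∫ s in (0:ℝ)..t, (deriv θ s - c * s)) = _
      rw [intervalIntegral.integral_sub hint hint2, hFTC,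
        intervalIntegral.integral_const_mul, integral_id]
      ring
    rw [this, h0]; ring
  -- θ = O(t²)
  have hθO : θ =O[𝓝 (0:ℝ)] fun t => t ^ 2 := by
    have h2 : (fun t => c / 2 * t ^ 2 + E₁ t) =O[𝓝 (0:ℝ)] fun t => t ^ 2 :=
      ((isBigO_refl (fun t : ℝ => t ^ 2) _).const_mul_left (c / 2)).add hE1.isBigO
    have θeq' : θ =ᶠ[𝓝 (0:ℝ)] fun t => c / 2 * t ^ 2 + E₁ t := θeq
    exact θeq'.trans_isBigO h2
  -- cos remainder
  have hcont : ContinuousAt θ 0 := (hθ.contDiffAt hnhds).continuousAt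
  have hsmall : ∀ᶠ s : ℝ in 𝓝 0, |θ s| ≤ 1 := by
    have : Tendsto θ (𝓝 0) (𝓝 0) := by
      simpa [h0] using hcont.tendsto
    have := this (Metric.closedBall_mem_nhds (0:ℝ) one_pos)
    filter_upwards [this] with s hs
    simpa [Real.dist_eq] using hs
  have h8o : (fun s : ℝ => s ^ 8) =o[𝓝 (0:ℝ)] fun s => s ^ 4 := by
    have h40 : (fun s : ℝ => s ^ 4) =o[𝓝 (0:ℝ)] fun _ => (1:ℝ) :=
      (isLittleO_one_iff ℝ).2 ((continuous_pow 4).tendsto' 0 0 (by norm_num))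
    have := (isBigO_refl (fun s : ℝ => s ^ 4) (𝓝 0)).mul_isLittleO h40
    simpa [← pow_add] using this
  have h4O : (fun s => θ s ^ 4) =O[𝓝 (0:ℝ)] fun s => s ^ 8 := by
    have := hθO.pow 4
    simpa [← pow_mul] using this
  have hcosO : (fun s => Real.cos (θ s) - 1 + θ s ^ 2 / 2) =O[𝓝 (0:ℝ)] fun s => θ s ^ 4 := by
    refine IsBigO.of_bound (5 / 96) ?_
    filter_upwards [hsmall] with s hs
    have hcb := Real.cos_bound hs
    have h1' : ‖Real.cos (θ s) - 1 + θ s ^ 2 / 2‖ = |Real.cos (θ s) - (1 - θ s ^ 2 / 2)| := by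
      rw [Real.norm_eq_abs]; ring_nf
    rw [h1', Real.norm_eq_abs, abs_pow]
    calc |Real.cos (θ s) - (1 - θ s ^ 2 / 2)| ≤ |θ s| ^ 4 * (5 / 96) := hcb
      _ = 5 / 96 * |θ s| ^ 4 := by ring
  have hcos : (fun s => Real.cos (θ s) - 1 + θ s ^ 2 / 2) =o[𝓝 (0:ℝ)] fun s => s ^ 4 :=
    hcosO.trans_isLittleO (h4O.trans_isLittleO h8o)
  -- quadratic remainder
  have hθplus : (fun s => θ s + c / 2 * s ^ 2) =O[𝓝 (0:ℝ)] fun s => s ^ 2 :=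
    hθO.add ((isBigO_refl (fun s : ℝ => s ^ 2) _).const_mul_left (c / 2))
  have h5 : (fun s => θ s ^ 2 / 2 - c ^ 2 / 8 * s ^ 4) =o[𝓝 (0:ℝ)] fun s => s ^ 4 := by
    have heq : (fun s => θ s ^ 2 / 2 - c ^ 2 / 8 * s ^ 4)
        =ᶠ[𝓝 (0:ℝ)] fun s => E₁ s * (θ s + c / 2 * s ^ 2) / 2 := by
      filter_upwards [θeq] with s hs
      have : θ s - c / 2 * s ^ 2 = E₁ s := by rw [hs]; ring
      rw [← this]; ring
    have hprod : (fun s => E₁ s * (θ s + c / 2 * s ^ 2) / 2) =o[𝓝 (0:ℝ)] fun s => s ^ 4 := by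
      have := (hE1.mul_isBigO hθplus).const_mul_left (1 / 2 : ℝ)
      have h : (fun s : ℝ => (1 / 2 : ℝ) * (E₁ s * (θ s + c / 2 * s ^ 2)))
          = fun s => E₁ s * (θ s + c / 2 * s ^ 2) / 2 := by funext s; ring
      rw [h] at this
      have h' : (fun s : ℝ => s ^ 2 * s ^ 2) = fun s : ℝ => s ^ 4 := by
        funext s; ring
      rwa [h'] at this
    exact heq.trans_isLittleO hprod
  have hf2 : (fun s => Real.cos (θ s) - (1 - c ^ 2 / 8 * s ^ 4)) =o[𝓝 (0:ℝ)]
      fun s => s ^ 4 := by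
    have := hcos.sub h5
    have h : (fun s => (Real.cos (θ s) - 1 + θ s ^ 2 / 2) - (θ s ^ 2 / 2 - c ^ 2 / 8 * s ^ 4))
        = fun s => Real.cos (θ s) - (1 - c ^ 2 / 8 * s ^ 4) := by funext s; ring
    rwa [h] at this
  set E₂ : ℝ → ℝ := fun t => ∫ s in (0:ℝ)..t, (Real.cos (θ s) - (1 - c ^ 2 / 8 * s ^ 4))
    with hE₂def
  have hE2 : E₂ =o[𝓝 (0:ℝ)] fun t => t ^ 5 := by
    simpa using integral_isLittleO_aux hf2
  -- expansion of the integral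
  have Feq : ∀ᶠ t : ℝ in 𝓝 0,
      (∫ s in (0:ℝ)..t, Real.cos (θ s)) = t - c ^ 2 / 40 * t ^ 5 + E₂ t := by
    filter_upwards [hball_ev] with t ht
    have hsub' := hsub t ht
    have hintc : IntervalIntegrable (fun s => Real.cos (θ s)) MeasureTheory.volume 0 t :=
      (Real.continuous_cos.comp_continuousOn (hθ.continuousOn.mono hsub')).intervalIntegrable
    have hintp : IntervalIntegrable (fun s : ℝ => 1 - c ^ 2 / 8 * s ^ 4)
        MeasureTheory.volume 0 t :=
      Continuous.intervalIntegrable (by fun_prop) 0 t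
    have : E₂ t = (∫ s in (0:ℝ)..t, Real.cos (θ s)) -
        ∫ s in (0:ℝ)..t, (1 - c ^ 2 / 8 * s ^ 4) := by
      show (∫ s in (0:ℝ)..t, (Real.cos (θ s) - (1 - c ^ 2 / 8 * s ^ 4))) = _
      exact intervalIntegral.integral_sub hintc hintp
    have hp : (∫ s in (0:ℝ)..t, (1 - c ^ 2 / 8 * s ^ 4)) = t - c ^ 2 / 40 * t ^ 5 := by
      rw [intervalIntegral.integral_sub (intervalIntegrable_const)
        (Continuous.intervalIntegrable (by fun_prop) 0 t),
        intervalIntegral.integral_const, intervalIntegral.integral_const_mul, integral_pow]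
      simp only [smul_eq_mul, sub_zero, mul_one]; ring
    rw [this, hp]; ring
  -- final algebra
  have h10o : (fun t : ℝ => t ^ 10) =o[𝓝 (0:ℝ)] fun t => t ^ 6 := by
    have h40 : (fun t : ℝ => t ^ 4) =o[𝓝 (0:ℝ)] fun _ => (1:ℝ) :=
      (isLittleO_one_iff ℝ).2 ((continuous_pow 4).tendsto' 0 0 (by norm_num))
    have := (isBigO_refl (fun t : ℝ => t ^ 6) (𝓝 0)).mul_isLittleO h40
    simpa [← pow_add] using this
  have term1 : (fun t : ℝ => (c ^ 2 / 40) ^ 2 * t ^ 10) =o[𝓝 (0:ℝ)] fun t => t ^ 6 :=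
    h10o.const_mul_left _
  have term2 : (fun t : ℝ => 2 * t * E₂ t) =o[𝓝 (0:ℝ)] fun t => t ^ 6 := by
    have := ((isBigO_refl (fun t : ℝ => t) (𝓝 0)).mul_isLittleO hE2).const_mul_left (2:ℝ)
    have h : (fun t : ℝ => (2:ℝ) * (t * E₂ t)) = fun t => 2 * t * E₂ t := by funext t; ring
    have h' : (fun t : ℝ => t * t ^ 5) = fun t : ℝ => t ^ 6 := by
      funext t; ring
    rw [h, h'] at this
    exact this
  have base3 : (fun t : ℝ => t ^ 5 * E₂ t) =o[𝓝 (0:ℝ)] fun t => t ^ 6 := by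
    have h := (isBigO_refl (fun t : ℝ => t ^ 5) (𝓝 0)).mul_isLittleO hE2
    have h' : (fun t : ℝ => t ^ 5 * t ^ 5) = fun t : ℝ => t ^ 10 := by funext t; ring
    rw [h'] at h
    exact h.trans_isBigO h10o.isBigO
  have term3 : (fun t : ℝ => 2 * (c ^ 2 / 40) * t ^ 5 * E₂ t) =o[𝓝 (0:ℝ)]
      fun t => t ^ 6 := by
    have := base3.const_mul_left (2 * (c ^ 2 / 40))
    have h : (fun t : ℝ => 2 * (c ^ 2 / 40) * (t ^ 5 * E₂ t))
        = fun t => 2 * (c ^ 2 / 40) * t ^ 5 * E₂ t := by funext t; ring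
    rwa [h] at this
  have term4 : (fun t : ℝ => E₂ t ^ 2) =o[𝓝 (0:ℝ)] fun t => t ^ 6 := by
    have h := hE2.mul hE2
    have h1 : (fun t : ℝ => E₂ t * E₂ t) = fun t => E₂ t ^ 2 := by funext t; ring
    have h2 : (fun t : ℝ => t ^ 5 * t ^ 5) = fun t : ℝ => t ^ 10 := by funext t; ring
    rw [h1, h2] at h
    exact h.trans_isBigO h10o.isBigO
  have hR : (fun t : ℝ => (c ^ 2 / 40) ^ 2 * t ^ 10 + 2 * t * E₂ t
      - 2 * (c ^ 2 / 40) * t ^ 5 * E₂ t + E₂ t ^ 2) =o[𝓝 (0:ℝ)] fun t => t ^ 6 :=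
    ((term1.add term2).sub term3).add term4
  have Geq : (fun t : ℝ => (∫ s in (0:ℝ)..t, Real.cos (θ s)) ^ 2 -
      (t ^ 2 - c ^ 2 / 20 * t ^ 6)) =ᶠ[𝓝 (0:ℝ)]
      fun t => (c ^ 2 / 40) ^ 2 * t ^ 10 + 2 * t * E₂ t
        - 2 * (c ^ 2 / 40) * t ^ 5 * E₂ t + E₂ t ^ 2 := by
    filter_upwards [Feq] with t hF
    rw [hF]; ring
  exact Geq.trans_isLittleO hR
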